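/- For any λ ∈ (0,1] and r ∈ [1, (1-λ)^{-1/λ}], the r-truncated λ-generalized Pareto distribution with CDF F(v) = 1 - ((r^λ - 1)/r · v + 1)^{-1/λ} on [0,r] is λ-regular: the map v ↦ λ·v - (1-F(v))/f(v) is non-decreasing on [0,r), where f is the density of F. -/

import Mathlib

/-- for `λ ∈ (0,1]` and `r ∈ [1,(1-λ)^{-1/λ}]`, the `r`-truncated
`λ`-generalized Pareto distribution with CDF `F v = 1 - ((r^λ-1)/r·v + 1)^{-1/λ}`
on `[0,r]` is `λ`-regular: `v ↦ λ·v - (1-F v)/f v` is non-decreasing on `[0,r)`. -/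
theorem stmt4 (lam r : ℝ) (hlam : lam ∈ Set.Ioc (0:ℝ) 1)
    (hr1 : 1 ≤ r) (hr2 : lam < 1 → r ≤ (1 - lam) ^ (-(1 / lam)))
    (F f : ℝ → ℝ)
    (hF : ∀ v ∈ Set.Icc (0:ℝ) r, F v = 1 - ((r ^ lam - 1) / r * v + 1) ^ (-(1 / lam)))
    (hFhigh : ∀ v : ℝ, r < v → F v = 1)
    (hf : ∀ v ∈ Set.Ico (0:ℝ) r, HasDerivAt F (f v) v) :
    ∀ v ∈ Set.Ico (0:ℝ) r, ∀ w ∈ Set.Ico (0:ℝ) r, v ≤ w →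
      lam * v - (1 - F v) / f v ≤ lam * w - (1 - F w) / f w := by
  obtain ⟨hlam0, hlam1⟩ := hlam
  set c : ℝ := (r ^ lam - 1) / r with hc
  have hr0 : (0:ℝ) < r := lt_of_lt_of_le one_pos hr1
  have hrp : (1:ℝ) ≤ r ^ lam := Real.one_le_rpow hr1 hlam0.le
  have hc0 : 0 ≤ c := div_nonneg (by linarith) hr0.le
  have key : ∀ v ∈ Set.Ico (0:ℝ) r,
      f v = c / lam * (c * v + 1) ^ (-(1/lam) - 1) ∧
      1 - F v = (c * v + 1) ^ (-(1/lam)) := by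
    intro v hv
    obtain ⟨hv0, hvr⟩ := hv
    have hB : 0 < c * v + 1 := by nlinarith [mul_nonneg hc0 hv0]
    have hG : HasDerivAt (fun x => 1 - (c * x + 1) ^ (-(1/lam)))
        (c / lam * (c * v + 1) ^ (-(1/lam) - 1)) v := by
      have h1 : HasDerivAt (fun x => c * x + 1) c v := by
        simpa using ((hasDerivAt_id v).const_mul c).add_const 1
      have h2 : HasDerivAt (fun y : ℝ => y ^ (-(1/lam)))
          (-(1/lam) * (c*v+1) ^ (-(1/lam) - 1)) (c*v+1) :=
        Real.hasDerivAt_rpow_const (Or.inl hB.ne')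
      have h3 := (h2.comp v h1).const_sub 1
      convert h3 using 1
      · rfl
      · rfl
      · rfl
      ring
    have huniq : UniqueDiffWithinAt ℝ (Set.Icc (0:ℝ) r) v :=
      (uniqueDiffOn_Icc hr0) v ⟨hv0, hvr.le⟩
    have hFw : HasDerivWithinAt F (f v) (Set.Icc 0 r) v :=
      (hf v ⟨hv0, hvr⟩).hasDerivWithinAt
    have hGw : HasDerivWithinAt F (c / lam * (c*v+1) ^ (-(1/lam)-1)) (Set.Icc 0 r) v := by
      refine hG.hasDerivWithinAt.congr (fun x hx => ?_) ?_
      · rw [hF x hx]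
      · rw [hF v ⟨hv0, hvr.le⟩]
    refine ⟨huniq.eq_deriv _ hFw hGw, ?_⟩
    rw [hF v ⟨hv0, hvr.le⟩]
    ring
  intro v hv w hw hvw
  obtain ⟨hfv, hFv⟩ := key v hv
  obtain ⟨hfw, hFw'⟩ := key w hw
  rcases eq_or_lt_of_le hc0 with h0 | hcpos
  · rw [hfv, hfw, hFv, hFw', ← h0]
    simp only [zero_div, zero_mul, div_zero]
    nlinarith
  · have hrat : ∀ u : ℝ, 0 ≤ u →
        lam * u - (c*u+1)^(-(1/lam)) / (c/lam * (c*u+1)^(-(1/lam)-1)) = -(lam/c) := by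
      intro u hu
      have hB : 0 < c * u + 1 := by nlinarith
      have hBp : (0:ℝ) < (c*u+1)^(-(1/lam)-1) := Real.rpow_pos_of_pos hB _
      have hsplit : (c*u+1)^(-(1/lam)) = (c*u+1) * (c*u+1)^(-(1/lam)-1) := by
        have h := Real.rpow_add hB 1 (-(1/lam)-1)
        rw [Real.rpow_one, show (1 + (-(1/lam)-1) : ℝ) = -(1/lam) by ring] at h
        exact h
      rw [hsplit]
      field_simp
      ring
    rw [hfv, hfw, hFv, hFw', hrat v hv.1, hrat w hw.1]
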